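/- Let J₁ and J₂ be regular J-classes of a finite semigroup S with J₁ >_J J₂ (i.e., the ideal generated by J₂ is strictly contained in the ideal generated by J₁). Then for every idempotent e ∈ J₁ there exists an idempotent f ∈ J₂ such that e > f in the idempotent order, i.e., f = ef = fe and e ≠ f. -/
import Mathlib


/-- Green's J-preorder in a semigroup: `a ≤_J b` iff `a ∈ S¹ b S¹`. -/
def jLe {S : Type*} [Semigroup S] (a b : S) : Prop :=
  a = b ∨ (∃ u, a = u * b) ∨ (∃ v, a = b * v) ∨ ∃ u v, a = u * b * v

/-- Green's J-equivalence. -/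
def jEquiv {S : Type*} [Semigroup S] (a b : S) : Prop := jLe a b ∧ jLe b a

theorem jLe_trans' {S : Type*} [Semigroup S] {a b c : S} (h1 : jLe a b) (h2 : jLe b c) :
    jLe a c := by
  obtain rfl | ⟨u, rfl⟩ | ⟨v, rfl⟩ | ⟨u, v, rfl⟩ := h1
  · exact h2
  · obtain rfl | ⟨u', rfl⟩ | ⟨v', rfl⟩ | ⟨u', v', rfl⟩ := h2
    · exact Or.inr (Or.inl ⟨u, rfl⟩)
    · exact Or.inr (Or.inl ⟨u * u', (mul_assoc ..).symm⟩)
    · exact Or.inr (Or.inr (Or.inr ⟨u, v', (mul_assoc ..).symm⟩))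
    · exact Or.inr (Or.inr (Or.inr ⟨u * u', v', by simp [mul_assoc]⟩))
  · obtain rfl | ⟨u', rfl⟩ | ⟨v', rfl⟩ | ⟨u', v', rfl⟩ := h2
    · exact Or.inr (Or.inr (Or.inl ⟨v, rfl⟩))
    · exact Or.inr (Or.inr (Or.inr ⟨u', v, rfl⟩))
    · exact Or.inr (Or.inr (Or.inl ⟨v' * v, mul_assoc ..⟩))
    · exact Or.inr (Or.inr (Or.inr ⟨u', v' * v, by simp [mul_assoc]⟩))
  · obtain rfl | ⟨u', rfl⟩ | ⟨v', rfl⟩ | ⟨u', v', rfl⟩ := h2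
    · exact Or.inr (Or.inr (Or.inr ⟨u, v, rfl⟩))
    · exact Or.inr (Or.inr (Or.inr ⟨u * u', v, by simp [mul_assoc]⟩))
    · exact Or.inr (Or.inr (Or.inr ⟨u, v' * v, by simp [mul_assoc]⟩))
    · exact Or.inr (Or.inr (Or.inr ⟨u * u', v' * v, by simp [mul_assoc]⟩))

/-- Rhodes (1966): if `J₁ >_J J₂` are regular J-classes, every idempotent of `J₁`
dominates some idempotent of `J₂` in the natural order on idempotents. -/
theorem stmt5 {S : Type*} [Semigroup S] [Fintype S]
    (e b : S) (he : e * e = e)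
    (hbreg : ∃ f, f * f = f ∧ jEquiv f b)
    (hlt : jLe b e ∧ ¬ jLe e b) :
    ∃ f : S, f * f = f ∧ jEquiv f b ∧ e * f = f ∧ f * e = f ∧ f ≠ e := by
  obtain ⟨f, hf, hfb, hbf⟩ := hbreg
  obtain ⟨hble, hnle⟩ := hlt
  have hfe : jLe f e := jLe_trans' hfb hble
  -- In each case we construct an idempotent g with e*g = g*e = g and g J f.
  -- Then g ≠ e, else e ≤_J f ≤_J b, contradiction.
  have finish : ∀ g : S, g * g = g → e * g = g → g * e = g → jLe g f → jLe f g →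
      ∃ f' : S, f' * f' = f' ∧ jEquiv f' b ∧ e * f' = f' ∧ f' * e = f' ∧ f' ≠ e := by
    intro g hgg heg hge hgf hfg
    refine ⟨g, hgg, ⟨jLe_trans' hgf hfb, jLe_trans' hbf hfg⟩, heg, hge, ?_⟩
    rintro rfl
    exact hnle (jLe_trans' hgf hfb)
  obtain rfl | ⟨u, hu⟩ | ⟨v, hv⟩ | ⟨u, v, huv⟩ := hfe
  · exact absurd hfb hnle
  · -- f = u * e ; take g = e * f
    refine finish (e * f) ?_ ?_ ?_ (Or.inr (Or.inl ⟨e, rfl⟩)) (Or.inr (Or.inl ⟨u, ?_⟩))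
    · calc e * f * (e * f) = e * (f * e * f) := by simp [mul_assoc]
        _ = e * (u * e * e * f) := by rw [hu]
        _ = e * (u * e * f) := by rw [mul_assoc u e e, he]
        _ = e * (f * f) := by rw [← hu]
        _ = e * f := by rw [hf]
    · rw [← mul_assoc, he]
    · calc e * f * e = e * (u * e * e) := by simp [hu, mul_assoc]
        _ = e * (u * e) := by rw [mul_assoc u e e, he]
        _ = e * f := by rw [← hu]
    · calc f = f * f := hf.symm
        _ = u * e * f := by rw [← hu]
        _ = u * (e * f) := mul_assoc ..
  · -- f = e * v ; take g = f * e
    refine finish (f * e) ?_ ?_ ?_ (Or.inr (Or.inr (Or.inl ⟨e, rfl⟩))) (Or.inr (Or.inr (Or.inl ⟨v, ?_⟩)))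
    · have hef : e * f = f := by rw [hv, ← mul_assoc, he]
      calc f * e * (f * e) = f * (e * f) * e := by simp [mul_assoc]
        _ = f * f * e := by rw [hef]
        _ = f * e := by rw [hf]
    · rw [hv]; calc e * (e * v * e) = e * e * v * e := by simp [mul_assoc]
        _ = e * v * e := by rw [he]
    · rw [mul_assoc, he]
    · calc f = f * f := hf.symm
        _ = f * (e * v) := by rw [← hv]
        _ = f * e * v := (mul_assoc ..).symm
  · -- f = u * e * v ; take g = e * v * f * u * e
    have huev : u * e * v = f := huv.symm
    refine finish (e * v * f * u * e) ?_ ?_ ?_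
      (Or.inr (Or.inr (Or.inr ⟨e * v, u * e, by simp [mul_assoc]⟩))) ?_
    · calc e * v * f * u * e * (e * v * f * u * e)
          = e * v * (f * (u * e * (e * (v * (f * (u * e)))))) := by simp [mul_assoc]
        _ = e * v * (f * (u * (e * e) * (v * (f * (u * e))))) := by simp [mul_assoc]
        _ = e * v * (f * (u * e * (v * (f * (u * e))))) := by rw [he]
        _ = e * v * (f * (u * e * v * (f * (u * e)))) := by simp [mul_assoc]
        _ = e * v * (f * (f * (f * (u * e)))) := by rw [huev]
        _ = e * v * (f * f * f * (u * e)) := by simp [mul_assoc]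
        _ = e * v * (f * (u * e)) := by rw [hf, hf]
        _ = e * v * f * u * e := by simp [mul_assoc]
    · calc e * (e * v * f * u * e) = e * e * (v * f * u * e) := by simp [mul_assoc]
        _ = e * (v * f * u * e) := by rw [he]
        _ = e * v * f * u * e := by simp [mul_assoc]
    · calc e * v * f * u * e * e = e * v * f * u * (e * e) := by simp [mul_assoc]
        _ = e * v * f * u * e := by rw [he]
    · have key : u * (e * v * f * u * e) * v = f := by
        calc u * (e * v * f * u * e) * v = u * e * v * f * (u * e * v) := by simp [mul_assoc]
          _ = f * f * f := by rw [huev]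
          _ = f := by rw [hf, hf]
      exact Or.inr (Or.inr (Or.inr ⟨u, v, key.symm⟩))
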